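/- Under the same setup, if c < c_d(1) then for every g > 1 there exists c' in an open interval contained in (-infinity, c_d(1)) for which both relative payoffs are strictly positive; in particular, for every g>1 the interval (c_u(g), c_d(g)) is nonempty and contained in (-infinity, c_d(1)). -/
import Mathlib


theorem interval_nonempty_subset (u d R S0 K0 : ℝ)
    (hd : 0 < d) (hdR : d < R) (hRu : R < u) (hS0 : 0 < S0)
    (hK1 : d * S0 < K0) (hK2 : K0 < u * S0) :
    let P0 := (1 / R) * ((u - R) / (u - d)) * (K0 - d * S0)
    let utilde := (u - R) * S0 / P0
    let dtilde := K0 / P0 - R * S0 / P0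
    let cu := fun g : ℝ => -(g * utilde + (1 - g) * R) / (u - R)
    let cd := fun g : ℝ => -(g * dtilde + (1 - g) * R) / (d - R)
    ∀ g : ℝ, g > 1 →
      (Set.Ioo (cu g) (cd g)).Nonempty ∧ Set.Ioo (cu g) (cd g) ⊆ Set.Iio (cd 1) ∧
      ∀ c' ∈ Set.Ioo (cu g) (cd g),
        g * (utilde - R) + R + c' * (u - R) > 0 ∧ g * (dtilde - R) + R + c' * (d - R) > 0 := by
  intro P0 utilde dtilde cu cd g hg
  have huR : (0:ℝ) < u - R := by linarith
  have hRd : (0:ℝ) < R - d := by linarith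
  have hud : (0:ℝ) < u - d := by linarith
  have hR : (0:ℝ) < R := by linarith
  have hK : (0:ℝ) < K0 - d * S0 := by linarith
  have hP0 : 0 < P0 := by
    show 0 < (1 / R) * ((u - R) / (u - d)) * (K0 - d * S0)
    positivity
  have hP0ne : P0 ≠ 0 := ne_of_gt hP0
  have hut : utilde * P0 = (u - R) * S0 := by
    show ((u - R) * S0 / P0) * P0 = (u - R) * S0
    field_simp
  have hdt : dtilde * P0 = K0 - R * S0 := by
    show (K0 / P0 - R * S0 / P0) * P0 = K0 - R * S0
    field_simp
  have hP0def : P0 * (R * (u - d)) = (u - R) * (K0 - d * S0) := by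
    show ((1 / R) * ((u - R) / (u - d)) * (K0 - d * S0)) * (R * (u - d)) = _
    field_simp
  have hid : dtilde * (u - R) + utilde * (R - d) = R * (u - d) := by
    have h1 : (dtilde * (u - R) + utilde * (R - d)) * P0 = R * (u - d) * P0 := by
      linear_combination (u - R) * hdt + (R - d) * hut - hP0def
    exact mul_right_cancel₀ hP0ne h1
  have hdtR : dtilde < R := by
    have h1 : dtilde * P0 < R * P0 := by
      rw [hdt]
      nlinarith [mul_pos hRd (sub_pos.mpr hK2)]
    exact lt_of_mul_lt_mul_right h1 (le_of_lt hP0)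
  have hA : ∀ h : ℝ, cu h * (u - R) = -(h * utilde + (1 - h) * R) := by
    intro h
    show (-(h * utilde + (1 - h) * R) / (u - R)) * (u - R) = _
    field_simp
  have hB : ∀ h : ℝ, cd h * (d - R) = -(h * dtilde + (1 - h) * R) := by
    intro h
    show (-(h * dtilde + (1 - h) * R) / (d - R)) * (d - R) = _
    have : d - R ≠ 0 := by linarith
    field_simp
  have hdiff : (cd g - cu g) * ((u - R) * (R - d)) = R * (u - d) := by
    linear_combination (-(u - R)) * hB g + (-(R - d)) * hA g + g * hid
  have h1 : cu g < cd g := by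
    nlinarith [mul_pos huR hRd, mul_pos hR hud, hdiff]
  have h2eq : (cd 1 - cd g) * (R - d) = (g - 1) * (R - dtilde) := by
    linear_combination hB g - hB 1
  have h2 : cd g < cd 1 := by
    nlinarith [mul_pos (sub_pos.mpr hg) (sub_pos.mpr hdtR), hRd]
  refine ⟨⟨(cu g + cd g) / 2, by constructor <;> linarith⟩,
    fun x hx => lt_trans hx.2 h2, fun c' hc' => ?_⟩
  constructor
  · have h3 := mul_lt_mul_of_pos_right hc'.1 huR
    nlinarith [hA g]
  · have h3 := mul_lt_mul_of_pos_right hc'.2 hRd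
    nlinarith [hB g]
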